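/- Suppose that the sequence (x_k)_{k∈ℕ} is bounded, that ξ_k ≤ 1 for every k ∈ ℕ, that ∑_k |α_k| < ∞, ∑_k |1 − β_k − γ_k| < ∞ and ∑_k ‖δ_k e_k‖ < ∞, and that γ_k → 1. Then: (1) x_k − J_{c_k}(x_k) → 0 strongly; (2) if moreover inf_{k∈ℕ} c_k > 0 or c_k → ∞, then Ω is nonempty and Ω ⊆ zer A (in particular zer A ≠ ∅). -/

import Mathlib

open Filter InnerProductSpace

/-- `z` is a weak sequential cluster point of the sequence `y`: some subsequence of `y`
converges weakly to `z`. -/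
def WSeqClusterPt {H : Type*} [NormedAddCommGroup H] [InnerProductSpace ℝ H]
    (y : ℕ → H) (z : H) : Prop :=
  ∃ φ : ℕ → ℕ, StrictMono φ ∧
    ∀ w : H, Tendsto (fun k => ⟪y (φ k), w⟫_ℝ) atTop (nhds ⟪z, w⟫_ℝ)


lemma key_ds {H : Type*} [NormedAddCommGroup H] [InnerProductSpace ℝ H]
    (y u : ℕ → H) (g : ℕ → ℝ)
    (hmono : ∀ k l, 0 ≤ ⟪y k - y l, u k - u l⟫_ℝ)
    (hg : ∀ k, 0 < g k) (n : ℕ)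
    (My CQ : ℝ) (hMy0 : 0 ≤ My) (hCQ0 : 0 ≤ CQ)
    (hyM : ∀ k, ‖y k‖ ≤ My)
    (hQ : ‖∑ k ∈ Finset.range n, g k • u k‖ ≤ CQ) :
    -(My * CQ) ≤ ∑ k ∈ Finset.range n, g k * ⟪y k, u k⟫_ℝ := by
  rcases Nat.eq_zero_or_pos n with hn | hn
  · simp [hn]; positivity
  set s := Finset.range n with hs
  set σ := ∑ k ∈ s, g k with hσ
  set D := ∑ k ∈ s, g k * ⟪y k, u k⟫_ℝ with hD
  set P := ∑ k ∈ s, g k • y k with hP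
  set Q := ∑ k ∈ s, g k • u k with hQdef
  have hσpos : 0 < σ := Finset.sum_pos (fun k _ => hg k) (by simp [hs, hn.ne'])
  have hPQ : ⟪P, Q⟫_ℝ = ∑ k ∈ s, ∑ l ∈ s, (g k * g l) * ⟪y k, u l⟫_ℝ := by
    rw [hP, hQdef, sum_inner]
    refine Finset.sum_congr rfl fun k _ => ?_
    rw [inner_sum]
    refine Finset.sum_congr rfl fun l _ => ?_
    rw [real_inner_smul_left, real_inner_smul_right]; ring
  have hPQ' : ⟪P, Q⟫_ℝ = ∑ k ∈ s, ∑ l ∈ s, (g k * g l) * ⟪y l, u k⟫_ℝ := by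
    rw [hPQ, Finset.sum_comm]
    exact Finset.sum_congr rfl fun k _ => Finset.sum_congr rfl fun l _ => by ring
  have hσD : σ * D = ∑ k ∈ s, ∑ l ∈ s, (g k * g l) * ⟪y k, u k⟫_ℝ := by
    rw [hσ, hD, Finset.sum_mul_sum]
    rw [Finset.sum_comm]
    refine Finset.sum_congr rfl fun k _ => Finset.sum_congr rfl fun l _ => by ring
  have hσD' : σ * D = ∑ k ∈ s, ∑ l ∈ s, (g k * g l) * ⟪y l, u l⟫_ℝ := by
    rw [hσD, Finset.sum_comm]
    exact Finset.sum_congr rfl fun k _ => Finset.sum_congr rfl fun l _ => by ring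
  have hnonneg : (0:ℝ) ≤ ∑ k ∈ s, ∑ l ∈ s, (g k * g l) * ⟪y k - y l, u k - u l⟫_ℝ :=
    Finset.sum_nonneg fun k _ => Finset.sum_nonneg fun l _ =>
      mul_nonneg (mul_nonneg (hg k).le (hg l).le) (hmono k l)
  have expand : ∑ k ∈ s, ∑ l ∈ s, (g k * g l) * ⟪y k - y l, u k - u l⟫_ℝ
      = 2 * (σ * D) - 2 * ⟪P, Q⟫_ℝ := by
    have e1 : ∀ k l : ℕ, (g k * g l) * ⟪y k - y l, u k - u l⟫_ℝ
        = (g k * g l) * ⟪y k, u k⟫_ℝ - (g k * g l) * ⟪y k, u l⟫_ℝ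
          - (g k * g l) * ⟪y l, u k⟫_ℝ + (g k * g l) * ⟪y l, u l⟫_ℝ := by
      intro k l
      rw [inner_sub_right, inner_sub_left, inner_sub_left]; ring
    simp_rw [e1, Finset.sum_add_distrib, Finset.sum_sub_distrib]
    rw [← hσD, ← hσD', ← hPQ, ← hPQ']; ring
  have h1 : ⟪P, Q⟫_ℝ ≤ σ * D := by linarith
  have h2 : -(σ * My * CQ) ≤ ⟪P, Q⟫_ℝ := by
    have := abs_real_inner_le_norm P Q
    have hPn : ‖P‖ ≤ σ * My := by
      rw [hP]
      calc ‖∑ k ∈ s, g k • y k‖ ≤ ∑ k ∈ s, ‖g k • y k‖ := norm_sum_le _ _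
        _ ≤ ∑ k ∈ s, g k * My := by
            refine Finset.sum_le_sum fun k _ => ?_
            rw [norm_smul, Real.norm_eq_abs, abs_of_pos (hg k)]
            exact mul_le_mul_of_nonneg_left (hyM k) (hg k).le
        _ = σ * My := by rw [hσ, Finset.sum_mul]
    have hq : |⟪P, Q⟫_ℝ| ≤ (σ * My) * CQ :=
      le_trans this (mul_le_mul hPn hQ (norm_nonneg _) (by positivity))
    have := neg_abs_le ⟪P, Q⟫_ℝ
    nlinarith
  have h3 : σ * (-(My * CQ)) ≤ σ * D := by nlinarith
  exact le_of_mul_le_mul_left h3 hσpos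

lemma key_ar {H : Type*} [NormedAddCommGroup H] [InnerProductSpace ℝ H]
    (A : H → Set H)
    (hmono : ∀ x y xu yv : H, xu ∈ A x → yv ∈ A y → 0 ≤ ⟪x - y, xu - yv⟫_ℝ)
    (x y u w : ℕ → H) (c γ : ℕ → ℝ)
    (hu : ∀ k, u k ∈ A (y k))
    (hc : ∀ k, 0 < c k)
    (hxy : ∀ k, x k - y k = c k • u k)
    (hrec : ∀ k, x (k + 1) = x k - γ k • (x k - y k) + w k)
    (hγl : ∀ k, 1/2 ≤ γ k) (hγu : ∀ k, γ k ≤ 3/2)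
    (M : ℝ) (hM : ∀ k, ‖x k‖ ≤ M)
    (hw : Summable fun k => ‖w k‖) :
    Tendsto (fun k => x k - y k) atTop (nhds 0) := by
  obtain ⟨a, ha⟩ : ∃ a : ℕ → H, ∀ k, a k = x k - y k := ⟨_, fun _ => rfl⟩
  obtain ⟨W, hW_def⟩ : ∃ W, W = ∑' k, ‖w k‖ := ⟨_, rfl⟩
  have hWk : ∀ k, ‖w k‖ ≤ W := by
    intro k; rw [hW_def]; exact Summable.le_tsum hw k (fun _ _ => norm_nonneg _)
  have hW0 : 0 ≤ W := le_trans (norm_nonneg _) (hWk 0)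
  have hWsum : ∀ n, ∑ k ∈ Finset.range n, ‖w k‖ ≤ W := by
    intro n; rw [hW_def]; exact Summable.sum_le_tsum _ (fun _ _ => norm_nonneg _) hw
  have hM0 : 0 ≤ M := le_trans (norm_nonneg _) (hM 0)
  -- bound on a
  obtain ⟨Ma, hMa_def⟩ : ∃ Ma, Ma = 2 * (2 * M + W) := ⟨_, rfl⟩
  have hMa0 : 0 ≤ Ma := by rw [hMa_def]; linarith
  have hrec' : ∀ k, γ k • a k = x k - x (k + 1) + w k := by
    intro k; rw [hrec k, ha k]; abel
  have haM : ∀ k, ‖a k‖ ≤ Ma := by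
    intro k
    have h1 : ‖γ k • a k‖ ≤ 2 * M + W := by
      rw [hrec' k]
      calc ‖x k - x (k + 1) + w k‖ ≤ ‖x k - x (k+1)‖ + ‖w k‖ := norm_add_le _ _
        _ ≤ (‖x k‖ + ‖x (k+1)‖) + ‖w k‖ := by gcongr; exact norm_sub_le _ _
        _ ≤ (M + M) + W := by gcongr; exacts [hM k, hM (k+1), hWk k]
        _ = 2 * M + W := by ring
    have h2 : ‖γ k • a k‖ = γ k * ‖a k‖ := by
      rw [norm_smul, Real.norm_eq_abs, abs_of_nonneg (by linarith [hγl k])]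
    rw [hMa_def]; nlinarith [hγl k, norm_nonneg (a k)]
  obtain ⟨My, hMy_def⟩ : ∃ My, My = M + Ma := ⟨_, rfl⟩
  have hyM : ∀ k, ‖y k‖ ≤ My := by
    intro k
    rw [show y k = x k - a k by rw [ha k]; abel]
    calc ‖x k - a k‖ ≤ ‖x k‖ + ‖a k‖ := norm_sub_le _ _
      _ ≤ M + Ma := add_le_add (hM k) (haM k)
      _ = My := hMy_def.symm
  -- telescoping bound
  have key5 : ∀ n, ‖∑ k ∈ Finset.range n, γ k • a k‖ ≤ 2 * M + W := by
    intro n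
    have : ∑ k ∈ Finset.range n, γ k • a k
        = (x 0 - x n) + ∑ k ∈ Finset.range n, w k := by
      rw [← Finset.sum_range_sub' x n, ← Finset.sum_add_distrib]
      exact Finset.sum_congr rfl fun k _ => hrec' k
    rw [this]
    calc ‖(x 0 - x n) + ∑ k ∈ Finset.range n, w k‖
        ≤ ‖x 0 - x n‖ + ‖∑ k ∈ Finset.range n, w k‖ := norm_add_le _ _
      _ ≤ (‖x 0‖ + ‖x n‖) + ∑ k ∈ Finset.range n, ‖w k‖ := by
          gcongr
          exacts [norm_sub_le _ _, norm_sum_le _ _]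
      _ ≤ (M + M) + W := by
          gcongr
          exacts [hM 0, hM n, hWsum n]
      _ = 2 * M + W := by ring
  -- per-step energy inequality
  obtain ⟨E, hE_def⟩ : ∃ E, E = 2 * (M + 2 * Ma) + W := ⟨_, rfl⟩
  have hE0 : 0 ≤ E := by rw [hE_def]; linarith
  have key6 : ∀ k, 3/4 * ‖a k‖^2 + 2 * (γ k * ⟪y k, a k⟫_ℝ)
      ≤ ‖x k‖^2 - ‖x (k+1)‖^2 + E * ‖w k‖ := by
    intro k
    have hp : x (k+1) = (x k - γ k • a k) + w k := by rw [hrec k, ha k]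
    have h1 : ‖x (k+1)‖^2 = ‖x k - γ k • a k‖^2 + 2 * ⟪x k - γ k • a k, w k⟫_ℝ + ‖w k‖^2 := by
      rw [hp, @norm_add_sq_real]
    have h2 : ‖x k - γ k • a k‖^2
        = ‖x k‖^2 - 2 * (γ k * ⟪x k, a k⟫_ℝ) + γ k^2 * ‖a k‖^2 := by
      rw [@norm_sub_sq_real, real_inner_smul_right, norm_smul, Real.norm_eq_abs,
        abs_of_nonneg (by linarith [hγl k] : (0:ℝ) ≤ γ k), mul_pow]
    have h3 : ⟪x k, a k⟫_ℝ = ⟪y k, a k⟫_ℝ + ‖a k‖^2 := by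
      have hxk : x k = y k + a k := by rw [ha k]; abel
      rw [hxk, inner_add_left, real_inner_self_eq_norm_sq]
    have h4 : |2 * ⟪x k - γ k • a k, w k⟫_ℝ + ‖w k‖^2| ≤ E * ‖w k‖ := by
      have hb : ‖x k - γ k • a k‖ ≤ M + 2 * Ma := by
        calc ‖x k - γ k • a k‖ ≤ ‖x k‖ + ‖γ k • a k‖ := norm_sub_le _ _
          _ ≤ M + 2 * Ma := by
              refine add_le_add (hM k) ?_
              rw [norm_smul, Real.norm_eq_abs, abs_of_nonneg (by linarith [hγl k])]
              nlinarith [hγu k, hγl k, norm_nonneg (a k), haM k]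
      have hcs := abs_real_inner_le_norm (x k - γ k • a k) (w k)
      have h5 : |⟪x k - γ k • a k, w k⟫_ℝ| ≤ (M + 2*Ma) * ‖w k‖ :=
        le_trans hcs (mul_le_mul_of_nonneg_right hb (norm_nonneg _))
      have h6 : ‖w k‖^2 ≤ W * ‖w k‖ := by nlinarith [norm_nonneg (w k), hWk k]
      rw [hE_def]
      have := abs_add_le (2 * ⟪x k - γ k • a k, w k⟫_ℝ) (‖w k‖^2)
      have h7 : |‖w k‖^2| = ‖w k‖^2 := abs_of_nonneg (by positivity)
      have h8 : |2 * ⟪x k - γ k • a k, w k⟫_ℝ| = 2 * |⟪x k - γ k • a k, w k⟫_ℝ| := by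
        rw [abs_mul]; norm_num
      nlinarith
    have hγq : 3/4 ≤ 2 * γ k - γ k^2 := by nlinarith [hγl k, hγu k]
    have habs := (abs_le.mp h4).2
    have h9 : γ k * ⟪x k, a k⟫_ℝ = γ k * ⟪y k, a k⟫_ℝ + γ k * ‖a k‖^2 := by
      rw [h3]; ring
    have h10 : (2 * γ k - γ k^2) * ‖a k‖^2
        = 2 * (γ k * ‖a k‖^2) - γ k^2 * ‖a k‖^2 := by ring
    have h11 := mul_le_mul_of_nonneg_right hγq (sq_nonneg ‖a k‖)
    linarith
  -- double-sum lower bound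
  have key7 : ∀ n, -(My * (2*M + W)) ≤ ∑ k ∈ Finset.range n, γ k * ⟪y k, a k⟫_ℝ := by
    intro n
    have hMy0 : 0 ≤ My := by rw [hMy_def]; linarith
    have hgc : ∀ k, 0 < γ k * c k := fun k => mul_pos (by linarith [hγl k]) (hc k)
    have hgu : ∀ k, (γ k * c k) • u k = γ k • a k := by
      intro k; rw [mul_smul, ← hxy k, ha k]
    have hgi : ∀ k, (γ k * c k) * ⟪y k, u k⟫_ℝ = γ k * ⟪y k, a k⟫_ℝ := by
      intro k
      rw [ha k, hxy k, real_inner_smul_right]; ring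
    have hQ : ‖∑ k ∈ Finset.range n, (γ k * c k) • u k‖ ≤ 2*M + W := by
      rw [Finset.sum_congr rfl fun k _ => hgu k]; exact key5 n
    have := key_ds y u (fun k => γ k * c k)
      (fun k l => hmono (y k) (y l) (u k) (u l) (hu k) (hu l))
      hgc n My (2*M + W) hMy0 (by positivity) hyM hQ
    calc -(My * (2*M+W)) ≤ ∑ k ∈ Finset.range n, (γ k * c k) * ⟪y k, u k⟫_ℝ := this
      _ = ∑ k ∈ Finset.range n, γ k * ⟪y k, a k⟫_ℝ :=
          Finset.sum_congr rfl fun k _ => hgi k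
  -- summability
  have hsum : Summable (fun k => ‖a k‖^2) := by
    refine summable_of_sum_range_le (c := (4/3) * (M^2 + E * W + 2 * (My * (2*M + W))))
      (fun k => sq_nonneg _) (fun n => ?_)
    have h1 : ∑ k ∈ Finset.range n, (3/4 * ‖a k‖^2 + 2 * (γ k * ⟪y k, a k⟫_ℝ))
        ≤ ∑ k ∈ Finset.range n, (‖x k‖^2 - ‖x (k+1)‖^2 + E * ‖w k‖) :=
      Finset.sum_le_sum fun k _ => key6 k
    rw [Finset.sum_add_distrib] at h1
    have h2 : ∑ k ∈ Finset.range n, (‖x k‖^2 - ‖x (k+1)‖^2 + E * ‖w k‖)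
        = (‖x 0‖^2 - ‖x n‖^2) + E * ∑ k ∈ Finset.range n, ‖w k‖ := by
      rw [Finset.sum_add_distrib, Finset.sum_range_sub' (fun k => ‖x k‖^2) n,
        Finset.mul_sum]
    have h3 : ∑ k ∈ Finset.range n, ‖w k‖ ≤ W := hWsum n
    have h4 : ‖x 0‖^2 - ‖x n‖^2 ≤ M^2 := by
      nlinarith [hM 0, norm_nonneg (x 0), norm_nonneg (x n), sq_nonneg (‖x n‖)]
    have h5 := key7 n
    have h6 : ∑ k ∈ Finset.range n, (3/4) * ‖a k‖^2
        = (3/4) * ∑ k ∈ Finset.range n, ‖a k‖^2 := by rw [Finset.mul_sum]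
    have h7 : ∑ k ∈ Finset.range n, 2 * (γ k * ⟪y k, a k⟫_ℝ)
        = 2 * ∑ k ∈ Finset.range n, γ k * ⟪y k, a k⟫_ℝ := by rw [Finset.mul_sum]
    rw [h6, h7] at h1
    have h8 : E * ∑ k ∈ Finset.range n, ‖w k‖ ≤ E * W :=
      mul_le_mul_of_nonneg_left h3 hE0
    nlinarith
  have hnorm2 : Tendsto (fun k => ‖a k‖^2) atTop (nhds 0) := hsum.tendsto_atTop_zero
  have hnorm : Tendsto (fun k => ‖a k‖) atTop (nhds 0) := by
    have hc2 : Tendsto (fun k => Real.sqrt (‖a k‖^2)) atTop (nhds (Real.sqrt 0)) :=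
      (Real.continuous_sqrt.tendsto 0).comp hnorm2
    rw [Real.sqrt_zero] at hc2
    convert hc2 using 2 with k
    rw [Real.sqrt_sq (norm_nonneg _)]
  have : Tendsto (fun k => ‖x k - y k‖) atTop (nhds 0) := by
    convert hnorm using 2 with k
    rw [ha k]
  exact tendsto_zero_iff_norm_tendsto_zero.mpr this


lemma exists_wcp {H : Type*} [NormedAddCommGroup H] [InnerProductSpace ℝ H] [CompleteSpace H]
    (x : ℕ → H) (M : ℝ) (hM : ∀ k, ‖x k‖ ≤ M) :
    ∃ (z : H) (φ : ℕ → ℕ), StrictMono φ ∧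
      ∀ w : H, Tendsto (fun k => ⟪x (φ k), w⟫_ℝ) atTop (nhds ⟪z, w⟫_ℝ) := by
  have hM0 : 0 ≤ M := le_trans (norm_nonneg _) (hM 0)
  set K : Submodule ℝ H := (Submodule.span ℝ (Set.range x)).topologicalClosure with hK
  have hxK : ∀ j, x j ∈ K :=
    fun j => (Submodule.span ℝ (Set.range x)).le_topologicalClosure
      (Submodule.subset_span (Set.mem_range_self j))
  have hKc : IsClosed (K : Set H) := Submodule.isClosed_topologicalClosure _
  haveI : CompleteSpace K := hKc.completeSpace_coe
  -- separability and countable dense family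
  have hsep : TopologicalSpace.IsSeparable (K : Set H) := by
    rw [hK, Submodule.topologicalClosure_coe]
    exact TopologicalSpace.isSeparable_closure.mpr
      (TopologicalSpace.IsSeparable.span (R := ℝ) (Set.countable_range x).isSeparable)
  obtain ⟨T, hTc, hTsub⟩ := hsep
  obtain ⟨d, hd⟩ : ∃ d : ℕ → H, insert (0:H) T = Set.range d :=
    (hTc.insert 0).exists_eq_range (Set.insert_nonempty _ _)
  -- compactness in the product space
  have hcomp : IsCompact (Set.pi Set.univ (fun i : ℕ => Set.Icc (-(M * ‖d i‖)) (M * ‖d i‖))) :=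
    isCompact_univ_pi fun i => isCompact_Icc
  have hFmem : ∀ k, (fun i => ⟪x k, d i⟫_ℝ) ∈
      Set.pi Set.univ (fun i : ℕ => Set.Icc (-(M * ‖d i‖)) (M * ‖d i‖)) := by
    intro k
    rw [Set.mem_univ_pi]
    intro i
    have h := abs_real_inner_le_norm (x k) (d i)
    have h2 : ‖x k‖ * ‖d i‖ ≤ M * ‖d i‖ :=
      mul_le_mul_of_nonneg_right (hM k) (norm_nonneg _)
    have := abs_le.mp (le_trans h h2)
    exact ⟨this.1, this.2⟩
  obtain ⟨L0, _, φ, hφ, hconv⟩ := hcomp.tendsto_subseq hFmem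
  have hdi : ∀ i, Tendsto (fun k => ⟪x (φ k), d i⟫_ℝ) atTop (nhds (L0 i)) := by
    intro i
    exact tendsto_pi_nhds.mp hconv i
  -- Cauchy for every direction
  have hcauchy : ∀ v : H, CauchySeq (fun k => ⟪x (φ k), v⟫_ℝ) := by
    intro v
    set pv : H := (K.orthogonalProjectionOnto v : H) with hpv
    have hxv : ∀ j, ⟪x j, v⟫_ℝ = ⟪x j, pv⟫_ℝ := by
      intro j
      have horth : v - pv ∈ Kᗮ := K.sub_starProjection_mem_orthogonal v
      have h0 : ⟪x j, v - pv⟫_ℝ = 0 :=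
        Submodule.inner_right_of_mem_orthogonal (hxK j) horth
      rw [inner_sub_right] at h0
      linarith
    have hpvT : pv ∈ closure (Set.range d) := by
      have h1 : pv ∈ (K : Set H) := Submodule.coe_mem _
      have h2 : (K : Set H) ⊆ closure T := hTsub
      have h3 : closure T ⊆ closure (Set.range d) := by
        apply closure_mono
        rw [← hd]
        exact Set.subset_insert _ _
      exact h3 (h2 h1)
    rw [Metric.cauchySeq_iff]
    intro ε hε
    obtain ⟨y, ⟨i, rfl⟩, hdist⟩ :=
      Metric.mem_closure_iff.mp hpvT (ε / (4 * (M + 1))) (by positivity)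
    have hcs : CauchySeq (fun k => ⟪x (φ k), d i⟫_ℝ) := (hdi i).cauchySeq
    obtain ⟨N, hN⟩ := Metric.cauchySeq_iff.mp hcs (ε/2) (by positivity)
    refine ⟨N, fun m hm n hn => ?_⟩
    have key : ∀ j, |⟪x (φ j), pv⟫_ℝ - ⟪x (φ j), d i⟫_ℝ| ≤ ε/4 := by
      intro j
      have : ⟪x (φ j), pv⟫_ℝ - ⟪x (φ j), d i⟫_ℝ = ⟪x (φ j), pv - d i⟫_ℝ := by
        rw [inner_sub_right]
      rw [this]
      calc |⟪x (φ j), pv - d i⟫_ℝ| ≤ ‖x (φ j)‖ * ‖pv - d i‖ := abs_real_inner_le_norm _ _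
        _ ≤ M * (ε / (4 * (M + 1))) := by
            apply mul_le_mul (hM _) ?_ (norm_nonneg _) hM0
            rw [← dist_eq_norm]
            exact hdist.le
        _ ≤ ε/4 := by
            rw [mul_div_assoc']
            rw [div_le_div_iff₀ (by positivity) (by norm_num)]
            nlinarith
    have hNmn := hN m hm n hn
    rw [Real.dist_eq] at hNmn ⊢
    rw [hxv (φ m), hxv (φ n)]
    have km := key m
    have kn := key n
    have : ⟪x (φ m), pv⟫_ℝ - ⟪x (φ n), pv⟫_ℝ
        = (⟪x (φ m), pv⟫_ℝ - ⟪x (φ m), d i⟫_ℝ) + (⟪x (φ m), d i⟫_ℝ - ⟪x (φ n), d i⟫_ℝ)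
          + (⟪x (φ n), d i⟫_ℝ - ⟪x (φ n), pv⟫_ℝ) := by ring
    rw [this]
    calc |_ + _ + _| ≤ |_ + _| + |⟪x (φ n), d i⟫_ℝ - ⟪x (φ n), pv⟫_ℝ| := abs_add_le _ _
      _ ≤ |⟪x (φ m), pv⟫_ℝ - ⟪x (φ m), d i⟫_ℝ| + |⟪x (φ m), d i⟫_ℝ - ⟪x (φ n), d i⟫_ℝ|
          + |⟪x (φ n), d i⟫_ℝ - ⟪x (φ n), pv⟫_ℝ| := by
            have := abs_add_le (⟪x (φ m), pv⟫_ℝ - ⟪x (φ m), d i⟫_ℝ)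
              (⟪x (φ m), d i⟫_ℝ - ⟪x (φ n), d i⟫_ℝ)
            linarith
      _ < ε/4 + ε/2 + ε/4 := by
          have h1 := key m
          have h2 := key n
          rw [abs_sub_comm] at h2
          have h3 : |⟪x (φ n), d i⟫_ℝ - ⟪x (φ n), pv⟫_ℝ| ≤ ε/4 := by
            rw [abs_sub_comm]; exact key n
          -- strict from middle
          have : |⟪x (φ m), d i⟫_ℝ - ⟪x (φ n), d i⟫_ℝ| < ε/2 := hNmn
          linarith
      _ = ε := by ring
  -- limits exist
  have hlim : ∀ v : H, ∃ l : ℝ, Tendsto (fun k => ⟪x (φ k), v⟫_ℝ) atTop (nhds l) :=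
    fun v => cauchySeq_tendsto_of_complete (hcauchy v)
  choose L hL using hlim
  have hadd : ∀ v₁ v₂, L (v₁ + v₂) = L v₁ + L v₂ := by
    intro v₁ v₂
    have h1 : Tendsto (fun k => ⟪x (φ k), v₁ + v₂⟫_ℝ) atTop (nhds (L v₁ + L v₂)) := by
      have := (hL v₁).add (hL v₂)
      simpa only [← inner_add_right] using this
    exact tendsto_nhds_unique (hL _) h1
  have hsmul : ∀ (r : ℝ) v, L (r • v) = r * L v := by
    intro r v
    have h1 : Tendsto (fun k => ⟪x (φ k), r • v⟫_ℝ) atTop (nhds (r * L v)) := by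
      have := (hL v).const_mul r
      simpa only [← real_inner_smul_right] using this
    exact tendsto_nhds_unique (hL _) h1
  have hbdd : ∀ v, ‖L v‖ ≤ M * ‖v‖ := by
    intro v
    have h1 : ∀ k, |⟪x (φ k), v⟫_ℝ| ≤ M * ‖v‖ := fun k =>
      le_trans (abs_real_inner_le_norm _ _)
        (mul_le_mul_of_nonneg_right (hM _) (norm_nonneg _))
    have h2 : Tendsto (fun k => |⟪x (φ k), v⟫_ℝ|) atTop (nhds |L v|) := (hL v).abs
    rw [Real.norm_eq_abs]
    exact le_of_tendsto h2 (Eventually.of_forall h1)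
  set f : H →L[ℝ] ℝ := LinearMap.mkContinuous
    { toFun := L, map_add' := hadd, map_smul' := hsmul } M hbdd with hf
  refine ⟨(toDual ℝ H).symm f, φ, hφ, fun v => ?_⟩
  have : ⟪(toDual ℝ H).symm f, v⟫_ℝ = f v := toDual_symm_apply
  rw [this]
  exact hL v

/-- Proposition 3.6 (Rockafellar-type): if the iterates `(x_k)` of the generalized proximal
point algorithm are bounded, `ξ_k ≤ 1`, `∑|α_k| < ∞`, `∑|1-β_k-γ_k| < ∞`,
`∑‖δ_k e_k‖ < ∞`, and `γ_k → 1`, then `x_k - J_{c_k}(x_k) → 0`; and if moreover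
`inf c_k > 0` or `c_k → ∞`, the set of weak sequential cluster points of `(x_k)` is
nonempty and contained in `zer A`. -/
theorem stmt10 {H : Type*} [NormedAddCommGroup H] [InnerProductSpace ℝ H] [CompleteSpace H]
    (A : H → Set H)
    (hmono : ∀ x y xu yv : H, xu ∈ A x → yv ∈ A y → 0 ≤ ⟪x - y, xu - yv⟫_ℝ)
    (hmax : ∀ x xu : H, (∀ y yv : H, yv ∈ A y → 0 ≤ ⟪x - y, xu - yv⟫_ℝ) → xu ∈ A x)
    (J : ℝ → H → H)
    (hJ : ∀ c : ℝ, 0 < c → ∀ x : H, (1 / c) • (x - J c x) ∈ A (J c x))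
    (u : H) (e : ℕ → H) (c α β γ δ : ℕ → ℝ) (hc : ∀ k, 0 < c k)
    (x : ℕ → H)
    (hrec : ∀ k, x (k + 1) = α k • u + β k • x k + γ k • J (c k) (x k) + δ k • e k)
    (ξ : ℕ → ℝ) (hξ : ∀ k, ξ k = |β k + γ k / 2| + |γ k / 2|)
    (hxbdd : Bornology.IsBounded (Set.range x))
    (hξ1 : ∀ k, ξ k ≤ 1)
    (hαsum : Summable (fun k => |α k|))
    (hβγsum : Summable (fun k => |1 - β k - γ k|))
    (hdesum : Summable (fun k => ‖δ k • e k‖))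
    (hγ1 : Tendsto γ atTop (nhds 1)) :
    Tendsto (fun k => x k - J (c k) (x k)) atTop (nhds (0 : H)) ∧
      (((∃ ε > (0 : ℝ), ∀ k, ε ≤ c k) ∨ Tendsto c atTop atTop) →
        (∃ z : H, WSeqClusterPt x z) ∧
          ∀ z : H, WSeqClusterPt x z → (0 : H) ∈ A z) := by
  obtain ⟨M, hM⟩ : ∃ M, ∀ k, ‖x k‖ ≤ M := by
    obtain ⟨C, hC⟩ := isBounded_iff_forall_norm_le.mp hxbdd
    exact ⟨C, fun k => hC _ (Set.mem_range_self k)⟩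
  -- Part 1
  have part1 : Tendsto (fun k => x k - J (c k) (x k)) atTop (nhds (0 : H)) := by
    obtain ⟨K₀, hK₀⟩ : ∃ K₀, ∀ k, K₀ ≤ k → 1/2 ≤ γ k ∧ γ k ≤ 3/2 := by
      obtain ⟨N, hN⟩ := Metric.tendsto_atTop.mp hγ1 (1/2) (by norm_num)
      refine ⟨N, fun k hk => ?_⟩
      have := hN k hk
      rw [Real.dist_eq] at this
      constructor <;> [linarith [abs_lt.mp this |>.1]; linarith [abs_lt.mp this |>.2]]
    obtain ⟨w, hw_def⟩ : ∃ w : ℕ → H, ∀ k,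
        w k = α k • u + (β k + γ k - 1) • x k + δ k • e k := ⟨_, fun _ => rfl⟩
    have hwsum : Summable fun k => ‖w k‖ := by
      have hle : ∀ k, ‖w k‖ ≤ |α k| * ‖u‖ + |1 - β k - γ k| * M + ‖δ k • e k‖ := by
        intro k
        have h1 : ‖w k‖ ≤ ‖α k • u + (β k + γ k - 1) • x k‖ + ‖δ k • e k‖ := by
          rw [hw_def k]; exact norm_add_le _ _
        have h2 : ‖α k • u + (β k + γ k - 1) • x k‖ ≤ ‖α k • u‖ + ‖(β k + γ k - 1) • x k‖ :=
          norm_add_le _ _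
        have h3 : ‖α k • u‖ = |α k| * ‖u‖ := by rw [norm_smul, Real.norm_eq_abs]
        have h4 : ‖(β k + γ k - 1) • x k‖ ≤ |1 - β k - γ k| * M := by
          rw [norm_smul, Real.norm_eq_abs]
          rw [show β k + γ k - 1 = -(1 - β k - γ k) by ring, abs_neg]
          exact mul_le_mul_of_nonneg_left (hM k) (abs_nonneg _)
        linarith
      refine Summable.of_nonneg_of_le (fun k => norm_nonneg _) hle ?_
      exact ((hαsum.mul_right ‖u‖).add (hβγsum.mul_right M)).add hdesum
    have hrec2 : ∀ k, x (k + 1) = x k - γ k • (x k - J (c k) (x k)) + w k := by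
      intro k
      rw [hrec k, hw_def k]
      module
    have main : Tendsto (fun j => x (j + K₀) - J (c (j + K₀)) (x (j + K₀))) atTop (nhds 0) := by
      refine key_ar A hmono (fun j => x (j + K₀)) (fun j => J (c (j + K₀)) (x (j + K₀)))
        (fun j => (1 / c (j + K₀)) • (x (j + K₀) - J (c (j + K₀)) (x (j + K₀))))
        (fun j => w (j + K₀)) (fun j => c (j + K₀)) (fun j => γ (j + K₀))
        (fun j => hJ _ (hc _) _) (fun j => hc _) (fun j => ?_) (fun j => ?_)
        (fun j => (hK₀ _ (Nat.le_add_left _ _)).1) (fun j => (hK₀ _ (Nat.le_add_left _ _)).2)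
        M (fun j => hM _) ?_
      · rw [smul_smul, mul_one_div_cancel (hc (j + K₀)).ne', one_smul]
      · show x ((j + 1) + K₀) = _
        rw [show (j + 1) + K₀ = (j + K₀) + 1 by omega]
        exact hrec2 (j + K₀)
      · exact (summable_nat_add_iff K₀).mpr hwsum
    rw [← tendsto_add_atTop_iff_nat K₀]
    exact main
  refine ⟨part1, fun hcase => ?_⟩
  -- convergence of the Yosida-type terms
  have hu0 : Tendsto (fun k => (1 / c k) • (x k - J (c k) (x k))) atTop (nhds (0:H)) := by
    have hnorm : Tendsto (fun k => ‖x k - J (c k) (x k)‖) atTop (nhds 0) :=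
      tendsto_zero_iff_norm_tendsto_zero.mp part1
    rcases hcase with ⟨ε, hε, hεc⟩ | hctop
    · have hb : ∀ k, ‖(1 / c k) • (x k - J (c k) (x k))‖ ≤ (1/ε) * ‖x k - J (c k) (x k)‖ := by
        intro k
        rw [norm_smul, Real.norm_eq_abs, abs_of_pos (div_pos one_pos (hc k))]
        apply mul_le_mul_of_nonneg_right _ (norm_nonneg _)
        rw [div_le_div_iff₀ (hc k) hε]
        nlinarith [hεc k, hc k]
      have hlim : Tendsto (fun k => (1/ε) * ‖x k - J (c k) (x k)‖) atTop (nhds 0) := by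
        have := hnorm.const_mul (1/ε)
        simpa using this
      exact squeeze_zero_norm hb hlim
    · have h1 : ∀ᶠ k in atTop, ‖x k - J (c k) (x k)‖ ≤ 1 := by
        have := hnorm.eventually (eventually_le_nhds (by norm_num : (0:ℝ) < 1))
        exact this
      have hb : ∀ᶠ k in atTop, ‖(1 / c k) • (x k - J (c k) (x k))‖ ≤ 1 / c k := by
        filter_upwards [h1] with k hk
        rw [norm_smul, Real.norm_eq_abs, abs_of_pos (div_pos one_pos (hc k))]
        calc 1 / c k * ‖x k - J (c k) (x k)‖ ≤ 1 / c k * 1 := by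
              apply mul_le_mul_of_nonneg_left hk (div_pos one_pos (hc k)).le
          _ = 1 / c k := mul_one _
      have hlim : Tendsto (fun k => 1 / c k) atTop (nhds 0) := by
        simp only [one_div]
        exact tendsto_inv_atTop_zero.comp hctop
      exact squeeze_zero_norm' hb hlim
  constructor
  · obtain ⟨z, φ, hφ, hwz⟩ := exists_wcp x M hM
    exact ⟨z, φ, hφ, hwz⟩
  · rintro z ⟨φ, hφ, hwz⟩
    refine hmax z 0 (fun yy v hv => ?_)
    have hφtop : Tendsto φ atTop atTop := hφ.tendsto_atTop
    have haφ : Tendsto (fun k => x (φ k) - J (c (φ k)) (x (φ k))) atTop (nhds 0) :=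
      part1.comp hφtop
    have huφ : Tendsto (fun k => (1 / c (φ k)) • (x (φ k) - J (c (φ k)) (x (φ k)))) atTop
        (nhds 0) := hu0.comp hφtop
    set Y : ℕ → H := fun k => J (c (φ k)) (x (φ k)) with hY
    set U : ℕ → H := fun k => (1 / c (φ k)) • (x (φ k) - J (c (φ k)) (x (φ k))) with hU
    have hineq : ∀ k, 0 ≤ ⟪Y k - yy, U k⟫_ℝ - ⟪Y k - yy, v⟫_ℝ := by
      intro k
      have := hmono (Y k) yy (U k) v (hJ _ (hc _) _) hv
      rw [inner_sub_right] at this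
      linarith
    -- first term tends to 0
    have ht1 : Tendsto (fun k => ⟪Y k - yy, U k⟫_ℝ) atTop (nhds 0) := by
      have hYb : ∀ᶠ k in atTop, ‖Y k - yy‖ ≤ M + 1 + ‖yy‖ := by
        have h1 : ∀ᶠ k in atTop, ‖x (φ k) - J (c (φ k)) (x (φ k))‖ ≤ 1 :=
          (tendsto_zero_iff_norm_tendsto_zero.mp haφ).eventually
            (eventually_le_nhds (by norm_num : (0:ℝ) < 1))
        filter_upwards [h1] with k hk
        have : Y k - yy = x (φ k) - (x (φ k) - J (c (φ k)) (x (φ k))) - yy := by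
          rw [hY]; abel
        rw [this]
        calc ‖x (φ k) - (x (φ k) - J (c (φ k)) (x (φ k))) - yy‖
            ≤ ‖x (φ k) - (x (φ k) - J (c (φ k)) (x (φ k)))‖ + ‖yy‖ := norm_sub_le _ _
          _ ≤ (‖x (φ k)‖ + ‖x (φ k) - J (c (φ k)) (x (φ k))‖) + ‖yy‖ := by
              gcongr
              exacts [norm_sub_le _ _]
          _ ≤ (M + 1) + ‖yy‖ := by first | (gcongr; exacts [hM _, hk]) | (gcongr; exacts [hM _]) | gcongr
          _ = M + 1 + ‖yy‖ := by ring
      have hb : ∀ᶠ k in atTop, ‖⟪Y k - yy, U k⟫_ℝ‖ ≤ (M + 1 + ‖yy‖) * ‖U k‖ := by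
        filter_upwards [hYb] with k hk
        rw [Real.norm_eq_abs]
        calc |⟪Y k - yy, U k⟫_ℝ| ≤ ‖Y k - yy‖ * ‖U k‖ := abs_real_inner_le_norm _ _
          _ ≤ (M + 1 + ‖yy‖) * ‖U k‖ := mul_le_mul_of_nonneg_right hk (norm_nonneg _)
      have hUn : Tendsto (fun k => ‖U k‖) atTop (nhds 0) :=
        tendsto_zero_iff_norm_tendsto_zero.mp huφ
      have hlim : Tendsto (fun k => (M + 1 + ‖yy‖) * ‖U k‖) atTop (nhds 0) := by
        have := hUn.const_mul (M + 1 + ‖yy‖)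
        simpa using this
      exact squeeze_zero_norm' hb hlim
    -- second term tends to ⟪z - yy, v⟫
    have ht2 : Tendsto (fun k => ⟪Y k - yy, v⟫_ℝ) atTop (nhds ⟪z - yy, v⟫_ℝ) := by
      have hdec : ∀ k, ⟪Y k - yy, v⟫_ℝ
          = ⟪x (φ k), v⟫_ℝ - ⟪x (φ k) - J (c (φ k)) (x (φ k)), v⟫_ℝ - ⟪yy, v⟫_ℝ := by
        intro k
        rw [hY]
        have : (J (c (φ k)) (x (φ k)) : H) - yy
            = x (φ k) - (x (φ k) - J (c (φ k)) (x (φ k))) - yy := by abel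
        rw [this, inner_sub_left, inner_sub_left]
      simp only [hdec]
      have hx1 : Tendsto (fun k => ⟪x (φ k), v⟫_ℝ) atTop (nhds ⟪z, v⟫_ℝ) := hwz v
      have hx2 : Tendsto (fun k => ⟪x (φ k) - J (c (φ k)) (x (φ k)), v⟫_ℝ) atTop (nhds 0) := by
        have hb : ∀ k, ‖⟪x (φ k) - J (c (φ k)) (x (φ k)), v⟫_ℝ‖
            ≤ ‖v‖ * ‖x (φ k) - J (c (φ k)) (x (φ k))‖ := by
          intro k
          rw [Real.norm_eq_abs]
          calc |⟪x (φ k) - J (c (φ k)) (x (φ k)), v⟫_ℝ|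
              ≤ ‖x (φ k) - J (c (φ k)) (x (φ k))‖ * ‖v‖ := abs_real_inner_le_norm _ _
            _ = ‖v‖ * ‖x (φ k) - J (c (φ k)) (x (φ k))‖ := mul_comm _ _
        have hlim : Tendsto (fun k => ‖v‖ * ‖x (φ k) - J (c (φ k)) (x (φ k))‖) atTop (nhds 0) := by
          have := (tendsto_zero_iff_norm_tendsto_zero.mp haφ).const_mul ‖v‖
          simpa using this
        exact squeeze_zero_norm hb hlim
      have := (hx1.sub hx2).sub tendsto_const_nhds (b := ⟪yy, v⟫_ℝ)
      convert this using 2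
      rw [inner_sub_left]
      ring
    -- pass to the limit
    have hlim : Tendsto (fun k => ⟪Y k - yy, U k⟫_ℝ - ⟪Y k - yy, v⟫_ℝ) atTop
        (nhds (0 - ⟪z - yy, v⟫_ℝ)) := ht1.sub ht2
    have h0 : 0 ≤ 0 - ⟪z - yy, v⟫_ℝ :=
      ge_of_tendsto hlim (Eventually.of_forall hineq)
    rw [zero_sub, inner_neg_right]
    linarith
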